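/- Let n ≥ 2, k ≥ 1 and let S ⊂ ℝ^{n+k} × ℝ be a compact set whose n-dimensional parabolic Hausdorff measure vanishes; that is, for every δ > 0 there is a finite cover of S by parabolic balls P_{r_i}(x_i, t_i) = B_{r_i}(x_i) × (t_i - r_i², t_i + r_i²) with all r_i < δ and Σ_i r_i^n < δ. Then for (Lebesgue) almost every t ∈ ℝ, the time slice S(t) = {x ∈ ℝ^{n+k} : (x,t) ∈ S} has vanishing (n-2)-dimensional Hausdorff measure: ℋ^{n-2}(S(t)) = 0. -/

import Mathlib

open MeasureTheory Filter
open scoped ENNReal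

/-- Lemma F.3: if a compact spacetime set `S ⊂ ℝ^{n+k} × ℝ` has vanishing
`n`-dimensional parabolic Hausdorff measure (witnessed by arbitrarily fine finite
parabolic-ball covers with `Σ rᵢⁿ < δ`), then for a.e. time `t` the slice `S(t)`
has vanishing `(n-2)`-dimensional Hausdorff measure. -/
theorem stmt9 (n k : ℕ) (hn : 2 ≤ n) (hk : 1 ≤ k)
    (S : Set (EuclideanSpace ℝ (Fin (n + k)) × ℝ)) (hS : IsCompact S)
    (hsmall : ∀ δ : ℝ, 0 < δ → ∃ (N : ℕ) (x : Fin N → EuclideanSpace ℝ (Fin (n + k)))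
      (tc : Fin N → ℝ) (r : Fin N → ℝ),
      (∀ i, 0 < r i) ∧ (∀ i, r i < δ) ∧ (∑ i, r i ^ n < δ) ∧
      S ⊆ ⋃ i, Metric.ball (x i) (r i) ×ˢ
        Set.Ioo (tc i - (r i) ^ 2) (tc i + (r i) ^ 2)) :
    ∀ᵐ t : ℝ, μH[(n : ℝ) - 2]
      {p : EuclideanSpace ℝ (Fin (n + k)) | (p, t) ∈ S} = 0 := by
  obtain ⟨j, rfl⟩ : ∃ j, n = j + 2 := ⟨n - 2, by omega⟩
  set d : ℝ := ((j + 2 : ℕ) : ℝ) - 2 with hd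
  have hdj : d = (j : ℕ) := by rw [hd]; push_cast; ring
  have hd0 : 0 ≤ d := by rw [hdj]; positivity
  -- choose covers
  have hpos : ∀ m : ℕ, (0:ℝ) < 1 / (m + 1) := fun m => by positivity
  choose N x tc r hr0 hrδ hsum hcov using fun m : ℕ => hsmall (1 / (m + 1)) (hpos m)
  set I : ∀ m : ℕ, Fin (N m) → Set ℝ :=
    fun m i => Set.Ioo (tc m i - r m i ^ 2) (tc m i + r m i ^ 2) with hI
  set c : ∀ m : ℕ, Fin (N m) → ℝ≥0∞ :=
    fun m i => ENNReal.ofReal (2 * r m i) ^ d with hc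
  set F : ℕ → ℝ → ℝ≥0∞ :=
    fun m t => ∑ i : Fin (N m), (I m i).indicator (fun _ => c m i) t with hF
  have hFmeas : ∀ m, Measurable (F m) := by
    intro m
    exact Finset.measurable_sum _ fun i _ =>
      Measurable.indicator measurable_const measurableSet_Ioo
  have htend0 : ∀ C : ℝ, Tendsto (fun m : ℕ => ENNReal.ofReal (C * (1 / (m + 1))))
      atTop (nhds 0) := by
    intro C
    have h1 : Tendsto (fun m : ℕ => C * (1 / (m + 1) : ℝ)) atTop (nhds 0) := by
      simpa using tendsto_one_div_add_atTop_nhds_zero_nat.const_mul C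
    simpa [ENNReal.ofReal_zero] using ENNReal.tendsto_ofReal h1
  -- pointwise bound
  have key : ∀ t : ℝ, μH[d] {p : EuclideanSpace ℝ (Fin (j + 2 + k)) | (p, t) ∈ S}
      ≤ atTop.liminf (fun m => F m t) := by
    intro t
    have hball : ∀ (m : ℕ) (i : Fin (N m)),
        EMetric.diam (Metric.ball (x m i) (r m i)) ≤ ENNReal.ofReal (2 * r m i) := by
      intro m i
      refine Metric.ediam_le_of_forall_dist_le (C := 2 * r m i) ?_
      intro a ha b hb
      calc dist a b ≤ dist a (x m i) + dist (x m i) b := dist_triangle _ _ _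
      _ ≤ r m i + r m i := by
          rw [Metric.mem_ball] at ha hb
          rw [dist_comm (x m i) b] at *
          linarith [ha.le, hb.le]
      _ = 2 * r m i := by ring
    have hball' : ∀ (m : ℕ) (i : Fin (N m)),
        EMetric.diam (Metric.ball (x m i) (r m i)) ≤ ENNReal.ofReal (2 * (1 / (m + 1))) :=
      fun m i => (hball m i).trans
        (ENNReal.ofReal_le_ofReal (by linarith [hrδ m i, hr0 m i]))
    have hle := Measure.hausdorffMeasure_le_liminf_tsum
      (ι := fun m => {i : Fin (N m) // t ∈ I m i}) d
      {p : EuclideanSpace ℝ (Fin (j + 2 + k)) | (p, t) ∈ S}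
      (l := atTop)
      (r := fun m => ENNReal.ofReal (2 * (1 / (m + 1))))
      ?_ (fun m i => Metric.ball (x m i.1) (r m i.1)) ?_ ?_
    · refine hle.trans (liminf_le_liminf (Eventually.of_forall fun m => ?_))
      have h1 : (∑' i : {i : Fin (N m) // t ∈ I m i},
          EMetric.diam (Metric.ball (x m i.1) (r m i.1)) ^ d)
          ≤ ∑' i : {i : Fin (N m) // t ∈ I m i}, c m i.1 := by
        refine ENNReal.tsum_le_tsum fun i => ?_
        exact ENNReal.rpow_le_rpow (hball m i.1) hd0
      refine h1.trans ?_
      have h2 : (∑' (i : {i : Fin (N m) // t ∈ I m i}), c m ↑i)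
          = ∑' i : Fin (N m), Set.indicator {i | t ∈ I m i} (c m) i :=
        tsum_subtype {i : Fin (N m) | t ∈ I m i} (c m)
      rw [h2, tsum_fintype]
      apply le_of_eq
      refine Finset.sum_congr rfl fun i _ => ?_
      simp [Set.indicator_apply]
    · exact htend0 2
    · exact Eventually.of_forall fun m i => hball' m i.1
    · refine Eventually.of_forall fun m => fun p hp => ?_
      have := hcov m hp
      simp only [Set.mem_iUnion, Set.mem_prod] at this
      obtain ⟨i, hpi, hti⟩ := this
      exact Set.mem_iUnion.2 ⟨⟨i, hti⟩, hpi⟩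
  -- integral bound
  have hint : ∀ m : ℕ, ∫⁻ t, F m t ≤ ENNReal.ofReal (2 ^ (j + 1) * (1 / (m + 1))) := by
    intro m
    have h1 : ∫⁻ t, F m t = ∑ i : Fin (N m), c m i * volume (I m i) := by
      rw [hF]
      simp only
      rw [lintegral_finset_sum _ fun i _ =>
        Measurable.indicator measurable_const measurableSet_Ioo]
      refine Finset.sum_congr rfl fun i _ => ?_
      rw [lintegral_indicator measurableSet_Ioo, setLIntegral_const]
    rw [h1]
    have h2 : ∀ i : Fin (N m), c m i * volume (I m i)
        = ENNReal.ofReal (2 ^ (j + 1) * r m i ^ (j + 2)) := by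
      intro i
      have hri := hr0 m i
      have hrpos : (0:ℝ) < 2 * r m i := by linarith
      rw [hc, hI]
      simp only
      rw [Real.volume_Ioo, ENNReal.ofReal_rpow_of_pos hrpos,
        ← ENNReal.ofReal_mul (by positivity)]
      congr 1
      have : tc m i + r m i ^ 2 - (tc m i - r m i ^ 2) = 2 * r m i ^ 2 := by ring
      rw [this, hdj, Real.rpow_natCast]
      ring
    rw [Finset.sum_congr rfl fun i _ => h2 i,
      ← ENNReal.ofReal_sum_of_nonneg (fun i _ => by have := (hr0 m i).le; positivity)]
    apply ENNReal.ofReal_le_ofReal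
    rw [← Finset.mul_sum]
    have := (hsum m).le
    have h2p : (0:ℝ) < 2 ^ (j + 1) := by positivity
    calc (2:ℝ) ^ (j+1) * ∑ i, r m i ^ (j + 2) ≤ 2 ^ (j+1) * (1 / (m + 1)) := by
          exact mul_le_mul_of_nonneg_left this h2p.le
    _ = _ := rfl
  -- conclude
  have hG : ∫⁻ t, atTop.liminf (fun m => F m t) = 0 := by
    have hle := lintegral_liminf_le hFmeas (μ := volume) (u := atTop)
    have htend : Tendsto (fun m : ℕ => ENNReal.ofReal (2 ^ (j + 1) * (1 / (m + 1))))
        atTop (nhds 0) := htend0 (2 ^ (j + 1))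
    have : atTop.liminf (fun m => ∫⁻ t, F m t) = 0 := by
      have h := liminf_le_liminf (Eventually.of_forall hint) (f := atTop)
      rw [htend.liminf_eq] at h
      exact le_antisymm (by simpa using h) (zero_le')
    exact le_antisymm (hle.trans this.le) (zero_le')
  have hGmeas : Measurable fun t => atTop.liminf (fun m => F m t) :=
    Measurable.liminf hFmeas
  have hae : ∀ᵐ t : ℝ, atTop.liminf (fun m => F m t) = 0 :=
    (lintegral_eq_zero_iff hGmeas).1 hG
  filter_upwards [hae] with t ht
  exact le_antisymm (by rw [← ht]; exact key t) (zero_le')
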